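/- Let d ≥ 3 be an integer. For each prime q set μ_q = ord_q(d²−1) and ν_q = ord_q(d), write [m] for the element of {0,1,2} congruent to m modulo 3, and define the finite set T_q ⊂ {0,1,2}² as follows: if q ∤ d(d²−1) then T_q = {(0,0)}; if q = 2 and 2 ∣ d then T_2 = {(0, [1−ν₂])}; if q = 2, 2 ∤ d and μ₂ ≥ 4 then T_2 = {(1,0), (0,1), (2,2)}; if q = 2, 2 ∤ d and μ₂ = 3 then T_2 = {(1,0), (0,1)}; if q is odd and q ∣ d then T_q = {([−ν_q], 0), (0, [−ν_q])}; if q is odd and q ∣ (d²−1) then T_q = {(0,0), (1,2), (2,1)} when μ_q ≥ 2 and T_q = {(0,0), (2,1)} when μ_q = 1. Suppose x, y are integers with d(2x+d+1)(x² + (d+1)x + d(d+1)/2) = 2y³. Then there exist positive integers α, β satisfying (ord_q(α), ord_q(β)) ∈ T_q for every prime q, and integers y₁, y₂, such that 2x+d+1 = α y₁³ and x² + (d+1)x + d(d+1)/2 = β y₂³. -/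

import Mathlib

/-- The set `T_q ⊂ {0,1,2}²` occurring in the descent for exponent `3`, associated to an
integer `d` and a prime `q`.  Here `μ = ord_q(d²−1)`, `ν = ord_q(d)`, and `[m]` denotes the
element of `{0,1,2}` congruent to `m` modulo `3`. -/
def descentSetCubes (d : ℤ) (q : ℕ) : Set (ℕ × ℕ) :=
  let μ : ℕ := padicValInt q (d ^ 2 - 1)
  let ν : ℕ := padicValInt q d
  if ¬ ((q : ℤ) ∣ d * (d ^ 2 - 1)) then {(0, 0)}
  else if q = 2 then
    if (2 : ℤ) ∣ d then {(0, ((1 - (ν : ℤ)) % 3).toNat)}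
    else if 4 ≤ μ then {(1, 0), (0, 1), (2, 2)}
    else {(1, 0), (0, 1)}
  else if (q : ℤ) ∣ d then {(((-(ν : ℤ)) % 3).toNat, 0), (0, ((-(ν : ℤ)) % 3).toNat)}
  else if 2 ≤ μ then {(0, 0), (1, 2), (2, 1)}
  else {(0, 0), (2, 1)}

section helpers
variable {q : ℕ} [hq : Fact q.Prime]

private lemma vdvd {a : ℤ} (ha : a ≠ 0) (n : ℕ) : (q:ℤ)^n ∣ a ↔ n ≤ padicValInt q a := by
  rw [padicValInt_dvd_iff]; simp [ha]

private lemma vpow {x : ℤ} (hx : x ≠ 0) (n : ℕ) :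
    padicValInt q (x ^ n) = n * padicValInt q x := by
  simp only [padicValInt, Int.natAbs_pow]
  exact padicValNat.pow _ n

private lemma vsum_lt {a b : ℤ} (ha : a ≠ 0) (hab : a + b ≠ 0)
    (h : padicValInt q a < padicValInt q b) : padicValInt q (a + b) = padicValInt q a := by
  have h1 : (q:ℤ)^(padicValInt q a) ∣ a + b :=
    dvd_add (padicValInt_dvd a) ((padicValInt_dvd_iff _ b).2 (Or.inr h.le))
  have h2 : ¬ (q:ℤ)^(padicValInt q a + 1) ∣ a + b := by
    intro hcon
    have hba : (q:ℤ)^(padicValInt q a + 1) ∣ a := by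
      have h5 := dvd_sub hcon ((padicValInt_dvd_iff (padicValInt q a + 1) b).2 (Or.inr h))
      simpa using h5
    rcases (padicValInt_dvd_iff _ a).1 hba with h0 | hle
    · exact ha h0
    · omega
  have h3 := ((vdvd hab _).1 h1)
  have h4 : ¬ (padicValInt q a + 1 ≤ padicValInt q (a+b)) := fun hc => h2 ((vdvd hab _).2 hc)
  omega

private lemma v2val : padicValInt q 2 = if q = 2 then 1 else 0 := by
  split
  · subst ‹q = 2›; exact padicValInt_self
  · refine padicValInt.eq_zero_of_not_dvd ?_
    intro hdvd
    have : q ∣ 2 := by exact_mod_cast hdvd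
    exact ‹¬ q = 2› ((Nat.prime_dvd_prime_iff_eq hq.out Nat.prime_two).1 this)

end helpers

private lemma core (d : ℤ) (hd : 3 ≤ d) (A B y : ℤ) (hA : A ≠ 0) (hB : 0 < B)
    (h4 : 4 * B = A ^ 2 + (d ^ 2 - 1)) (hy : d * A * B = 2 * y ^ 3)
    (q : ℕ) (hq : q.Prime) :
    (padicValInt q A % 3, padicValInt q B % 3) ∈ descentSetCubes d q := by
  haveI : Fact q.Prime := ⟨hq⟩
  have hd0 : d ≠ 0 := by omega
  have hD : d ^ 2 - 1 ≠ 0 := by nlinarith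
  have hB0 : B ≠ 0 := hB.ne'
  have hA2 : A ^ 2 ≠ 0 := pow_ne_zero _ hA
  have h4B0 : A ^ 2 + (d ^ 2 - 1) ≠ 0 := by rw [← h4]; positivity
  have hy0 : y ≠ 0 := by
    intro h0
    apply mul_ne_zero (mul_ne_zero hd0 hA) hB0
    rw [hy, h0]; ring
  have E : padicValInt q d + padicValInt q A + padicValInt q B
      = padicValInt q 2 + 3 * padicValInt q y := by
    have h := congrArg (padicValInt q) hy
    rw [padicValInt.mul (mul_ne_zero hd0 hA) hB0, padicValInt.mul hd0 hA,
        padicValInt.mul two_ne_zero (pow_ne_zero 3 hy0), vpow hy0 3] at h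
    omega
  have h2divall : (2:ℤ) ∣ d * (d ^ 2 - 1) := by
    have he : d * (d ^ 2 - 1) = (d * (d + 1)) * (d - 1) := by ring
    rw [he]
    exact ((Int.even_mul_succ_self d).two_dvd).mul_right _
  by_cases hnd : (q:ℤ) ∣ d * (d ^ 2 - 1)
  · by_cases hq2 : q = 2
    · subst hq2
      have hv2 : padicValInt 2 (2:ℤ) = 1 := padicValInt_self
      have hnd2 : (2:ℤ) ∣ d * (d ^ 2 - 1) := by exact_mod_cast hnd
      by_cases hdd : (2:ℤ) ∣ d
      · have hDodd : ¬ (2:ℤ) ∣ (d ^ 2 - 1) := by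
          intro h2D
          have h1 : (2:ℤ) ∣ 1 := by
            have he : (1:ℤ) = d * d - (d ^ 2 - 1) := by ring
            rw [he]; exact dvd_sub (hdd.mul_right d) h2D
          norm_num at h1
        have hAodd : ¬ (2:ℤ) ∣ A := by
          intro h2A
          apply hDodd
          have he : d ^ 2 - 1 = 4 * B - A * A := by linarith
          rw [he]
          exact dvd_sub ⟨2 * B, by ring⟩ (h2A.mul_left A)
        have ha0 : padicValInt 2 A = 0 := padicValInt.eq_zero_of_not_dvd (by exact_mod_cast hAodd)
        simp only [descentSetCubes, Nat.cast_ofNat]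
        rw [if_neg (not_not_intro hnd2), if_pos trivial, if_pos hdd]
        simp only [Set.mem_singleton_iff, Prod.mk.injEq]
        omega
      · have hν : padicValInt 2 d = 0 := padicValInt.eq_zero_of_not_dvd (by exact_mod_cast hdd)
        have h8 : (2:ℤ) ^ 3 ∣ d ^ 2 - 1 := by
          obtain ⟨k, hk⟩ : Odd d := Int.not_even_iff_odd.1 (fun he => hdd he.two_dvd)
          obtain ⟨m, hm⟩ := Int.even_mul_succ_self k
          exact ⟨m, by rw [hk]; linear_combination (4:ℤ) * hm⟩
        have hμ3 : 3 ≤ padicValInt 2 (d ^ 2 - 1) := (vdvd hD 3).1 (by exact_mod_cast h8)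
        have h2D : (2:ℤ) ∣ d ^ 2 - 1 := dvd_trans ⟨4, by norm_num⟩ h8
        have h2A : (2:ℤ) ∣ A := by
          have h2sq : (2:ℤ) ∣ A ^ 2 := by
            have he : A ^ 2 = 4 * B - (d ^ 2 - 1) := by linarith
            rw [he]
            exact dvd_sub ⟨2 * B, by ring⟩ h2D
          exact Int.prime_two.dvd_of_dvd_pow h2sq
        have ha1 : 1 ≤ padicValInt 2 A := (vdvd hA 1).1 (by exact_mod_cast (by simpa using h2A))
        have hvA2 : padicValInt 2 (A ^ 2) = 2 * padicValInt 2 A := vpow hA 2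
        have hv4B : padicValInt 2 (4 * B) = 2 + padicValInt 2 B := by
          rw [show (4:ℤ) * B = 2 * (2 * B) by ring,
            padicValInt.mul two_ne_zero (mul_ne_zero two_ne_zero hB0),
            padicValInt.mul two_ne_zero hB0, hv2]
          omega
        simp only [descentSetCubes, Nat.cast_ofNat]
        rw [if_neg (not_not_intro hnd2), if_pos trivial, if_neg hdd]
        rcases lt_trichotomy (2 * padicValInt 2 A) (padicValInt 2 (d ^ 2 - 1)) with hlt | heq | hgt
        · have hsum : padicValInt 2 (A ^ 2 + (d ^ 2 - 1)) = 2 * padicValInt 2 A := by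
            rw [vsum_lt hA2 h4B0 (by omega)]
            exact hvA2
          have hb : 2 + padicValInt 2 B = 2 * padicValInt 2 A := by
            rw [← hv4B, h4, hsum]
          by_cases hμ4 : 4 ≤ padicValInt 2 (d ^ 2 - 1)
          · rw [if_pos hμ4]
            simp only [Set.mem_insert_iff, Set.mem_singleton_iff, Prod.mk.injEq]
            omega
          · rw [if_neg hμ4]
            simp only [Set.mem_insert_iff, Set.mem_singleton_iff, Prod.mk.injEq]
            omega
        · by_cases hμ4 : 4 ≤ padicValInt 2 (d ^ 2 - 1)
          · rw [if_pos hμ4]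
            simp only [Set.mem_insert_iff, Set.mem_singleton_iff, Prod.mk.injEq]
            omega
          · rw [if_neg hμ4]
            simp only [Set.mem_insert_iff, Set.mem_singleton_iff, Prod.mk.injEq]
            omega
        · have hsum : padicValInt 2 (A ^ 2 + (d ^ 2 - 1)) = padicValInt 2 (d ^ 2 - 1) := by
            rw [show A ^ 2 + (d ^ 2 - 1) = (d ^ 2 - 1) + A ^ 2 by ring]
            exact vsum_lt hD (by rw [show (d^2-1)+A^2 = A^2+(d^2-1) by ring]; exact h4B0) (by omega)
          have hb : 2 + padicValInt 2 B = padicValInt 2 (d ^ 2 - 1) := by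
            rw [← hv4B, h4, hsum]
          by_cases hμ4 : 4 ≤ padicValInt 2 (d ^ 2 - 1)
          · rw [if_pos hμ4]
            simp only [Set.mem_insert_iff, Set.mem_singleton_iff, Prod.mk.injEq]
            omega
          · rw [if_neg hμ4]
            simp only [Set.mem_insert_iff, Set.mem_singleton_iff, Prod.mk.injEq]
            omega
    · -- q odd
      have hv2 : padicValInt q (2:ℤ) = 0 := by rw [v2val, if_neg hq2]
      have hv4B : padicValInt q (4 * B) = padicValInt q B := by
        rw [show (4:ℤ) * B = 2 * (2 * B) by ring,
          padicValInt.mul two_ne_zero (mul_ne_zero two_ne_zero hB0),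
          padicValInt.mul two_ne_zero hB0, hv2]
        omega
      by_cases hqd : (q:ℤ) ∣ d
      · have hqD : ¬ (q:ℤ) ∣ (d ^ 2 - 1) := by
          intro hdvd
          have h1 : (q:ℤ) ∣ 1 := by
            have he : (1:ℤ) = d * d - (d ^ 2 - 1) := by ring
            rw [he]; exact dvd_sub (hqd.mul_right d) hdvd
          have h2 := Int.le_of_dvd one_pos h1
          have h3 := hq.two_le
          omega
        have hab : padicValInt q A = 0 ∨ padicValInt q B = 0 := by
          by_contra hcon
          push_neg at hcon
          apply hqD
          have h1 : (q:ℤ) ∣ A := by simpa using (vdvd hA 1).2 (by omega)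
          have h2 : (q:ℤ) ∣ B := by simpa using (vdvd hB0 1).2 (by omega)
          have he : d ^ 2 - 1 = 4 * B - A * A := by linarith
          rw [he]; exact dvd_sub (h2.mul_left 4) (h1.mul_left A)
        simp only [descentSetCubes]
        rw [if_neg (not_not_intro hnd), if_neg hq2, if_pos hqd]
        simp only [Set.mem_insert_iff, Set.mem_singleton_iff, Prod.mk.injEq]
        omega
      · have hqD : (q:ℤ) ∣ d ^ 2 - 1 := by
          rcases (Int.Prime.dvd_mul' hq hnd) with h | h
          · exact absurd h hqd
          · exact h
        have hν : padicValInt q d = 0 := padicValInt.eq_zero_of_not_dvd hqd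
        have hμ1 : 1 ≤ padicValInt q (d ^ 2 - 1) := (vdvd hD 1).1 (by simpa using hqD)
        simp only [descentSetCubes]
        rw [if_neg (not_not_intro hnd), if_neg hq2, if_neg hqd]
        by_cases ha0 : padicValInt q A = 0
        · by_cases hμ2 : 2 ≤ padicValInt q (d ^ 2 - 1)
          · rw [if_pos hμ2]
            simp only [Set.mem_insert_iff, Set.mem_singleton_iff, Prod.mk.injEq]
            omega
          · rw [if_neg hμ2]
            simp only [Set.mem_insert_iff, Set.mem_singleton_iff, Prod.mk.injEq]
            omega
        · have ha1 : 1 ≤ padicValInt q A := by omega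
          have hvA2 : padicValInt q (A ^ 2) = 2 * padicValInt q A := vpow hA 2
          rcases lt_trichotomy (2 * padicValInt q A) (padicValInt q (d ^ 2 - 1)) with hlt | heq | hgt
          · have hsum : padicValInt q (A ^ 2 + (d ^ 2 - 1)) = 2 * padicValInt q A := by
              rw [vsum_lt hA2 h4B0 (by omega)]
              exact hvA2
            have hb : padicValInt q B = 2 * padicValInt q A := by
              rw [← hv4B, h4, hsum]
            by_cases hμ2 : 2 ≤ padicValInt q (d ^ 2 - 1)
            · rw [if_pos hμ2]
              simp only [Set.mem_insert_iff, Set.mem_singleton_iff, Prod.mk.injEq]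
              omega
            · rw [if_neg hμ2]
              simp only [Set.mem_insert_iff, Set.mem_singleton_iff, Prod.mk.injEq]
              omega
          · by_cases hμ2 : 2 ≤ padicValInt q (d ^ 2 - 1)
            · rw [if_pos hμ2]
              simp only [Set.mem_insert_iff, Set.mem_singleton_iff, Prod.mk.injEq]
              omega
            · rw [if_neg hμ2]
              simp only [Set.mem_insert_iff, Set.mem_singleton_iff, Prod.mk.injEq]
              omega
          · have hsum : padicValInt q (A ^ 2 + (d ^ 2 - 1)) = padicValInt q (d ^ 2 - 1) := by
              rw [show A ^ 2 + (d ^ 2 - 1) = (d ^ 2 - 1) + A ^ 2 by ring]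
              exact vsum_lt hD (by rw [show (d^2-1)+A^2 = A^2+(d^2-1) by ring]; exact h4B0) (by omega)
            have hb : padicValInt q B = padicValInt q (d ^ 2 - 1) := by
              rw [← hv4B, h4, hsum]
            by_cases hμ2 : 2 ≤ padicValInt q (d ^ 2 - 1)
            · rw [if_pos hμ2]
              simp only [Set.mem_insert_iff, Set.mem_singleton_iff, Prod.mk.injEq]
              omega
            · rw [if_neg hμ2]
              simp only [Set.mem_insert_iff, Set.mem_singleton_iff, Prod.mk.injEq]
              omega
  · -- q ∤ d(d²−1)
    have hqd : ¬ (q:ℤ) ∣ d := fun h => hnd (h.mul_right _)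
    have hqD : ¬ (q:ℤ) ∣ (d ^ 2 - 1) := fun h => hnd (h.mul_left _)
    have hν : padicValInt q d = 0 := padicValInt.eq_zero_of_not_dvd hqd
    have hq2 : q ≠ 2 := by
      rintro rfl
      exact hnd (by exact_mod_cast h2divall)
    have hv2 : padicValInt q (2:ℤ) = 0 := by rw [v2val, if_neg hq2]
    have hab : padicValInt q A = 0 ∨ padicValInt q B = 0 := by
      by_contra hcon
      push_neg at hcon
      apply hqD
      have h1 : (q:ℤ) ∣ A := by simpa using (vdvd hA 1).2 (by omega)
      have h2 : (q:ℤ) ∣ B := by simpa using (vdvd hB0 1).2 (by omega)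
      have he : d ^ 2 - 1 = 4 * B - A * A := by linarith
      rw [he]; exact dvd_sub (h2.mul_left 4) (h1.mul_left A)
    simp only [descentSetCubes]
    rw [if_pos hnd]
    simp only [Set.mem_singleton_iff, Prod.mk.injEq]
    omega

private lemma core0 (d : ℤ) (hd : 3 ≤ d) (B : ℤ) (hB : 0 < B) (h4 : 4 * B = d ^ 2 - 1)
    (q : ℕ) (hq : q.Prime) :
    (padicValInt q (2 * (d * B) ^ 2) % 3, padicValInt q B % 3) ∈ descentSetCubes d q := by
  haveI : Fact q.Prime := ⟨hq⟩
  have hd0 : d ≠ 0 := by omega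
  have hD : d ^ 2 - 1 ≠ 0 := by nlinarith
  have hB0 : B ≠ 0 := hB.ne'
  have hdd : ¬ (2:ℤ) ∣ d := by
    intro h2d
    have h1 : (2:ℤ) ∣ 1 := by
      have he : (1:ℤ) = d * d - 4 * B := by linarith
      rw [he]; exact dvd_sub (h2d.mul_right d) ⟨2 * B, by ring⟩
    norm_num at h1
  have hva : padicValInt q (2 * (d * B) ^ 2)
      = padicValInt q 2 + 2 * (padicValInt q d + padicValInt q B) := by
    rw [padicValInt.mul two_ne_zero (pow_ne_zero _ (mul_ne_zero hd0 hB0)),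
      vpow (mul_ne_zero hd0 hB0) 2, padicValInt.mul hd0 hB0]
  have hvb : 2 * padicValInt q 2 + padicValInt q B = padicValInt q (d ^ 2 - 1) := by
    rw [← h4, show (4:ℤ) * B = 2 * (2 * B) by ring,
      padicValInt.mul two_ne_zero (mul_ne_zero two_ne_zero hB0),
      padicValInt.mul two_ne_zero hB0]
    omega
  have h2divall : (2:ℤ) ∣ d * (d ^ 2 - 1) := ⟨d * 2 * B, by linear_combination (-d) * h4⟩
  by_cases hnd : (q:ℤ) ∣ d * (d ^ 2 - 1)
  · by_cases hq2 : q = 2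
    · subst hq2
      have hν : padicValInt 2 d = 0 := padicValInt.eq_zero_of_not_dvd (by exact_mod_cast hdd)
      have hnd2 : (2:ℤ) ∣ d * (d ^ 2 - 1) := by exact_mod_cast hnd
      have hv2 : padicValInt 2 (2:ℤ) = 1 := padicValInt_self
      have h8 : (2:ℤ) ^ 3 ∣ d ^ 2 - 1 := by
        obtain ⟨k, hk⟩ : Odd d := Int.not_even_iff_odd.1 (fun he => hdd he.two_dvd)
        obtain ⟨m, hm⟩ := Int.even_mul_succ_self k
        exact ⟨m, by rw [hk]; linear_combination (4:ℤ) * hm⟩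
      have hμ3 : 3 ≤ padicValInt 2 (d ^ 2 - 1) := (vdvd hD 3).1 (by exact_mod_cast h8)
      simp only [descentSetCubes, Nat.cast_ofNat]
      rw [if_neg (not_not_intro hnd2), if_pos trivial, if_neg hdd]
      by_cases hμ4 : 4 ≤ padicValInt 2 (d ^ 2 - 1)
      · rw [if_pos hμ4]
        simp only [Set.mem_insert_iff, Set.mem_singleton_iff, Prod.mk.injEq]
        omega
      · rw [if_neg hμ4]
        simp only [Set.mem_insert_iff, Set.mem_singleton_iff, Prod.mk.injEq]
        omega
    · have hv2 : padicValInt q (2:ℤ) = 0 := by rw [v2val, if_neg hq2]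
      by_cases hqd : (q:ℤ) ∣ d
      · have hqD : ¬ (q:ℤ) ∣ (d ^ 2 - 1) := by
          intro hdvd
          have h1 : (q:ℤ) ∣ 1 := by
            have he : (1:ℤ) = d * d - (d ^ 2 - 1) := by ring
            rw [he]; exact dvd_sub (hqd.mul_right d) hdvd
          have h2 := Int.le_of_dvd one_pos h1
          have h3 := hq.two_le
          omega
        have hμ0 : padicValInt q (d ^ 2 - 1) = 0 := padicValInt.eq_zero_of_not_dvd hqD
        simp only [descentSetCubes]
        rw [if_neg (not_not_intro hnd), if_neg hq2, if_pos hqd]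
        simp only [Set.mem_insert_iff, Set.mem_singleton_iff, Prod.mk.injEq]
        omega
      · have hν : padicValInt q d = 0 := padicValInt.eq_zero_of_not_dvd hqd
        have hqD : (q:ℤ) ∣ d ^ 2 - 1 := by
          rcases Int.Prime.dvd_mul' hq hnd with h | h
          · exact absurd h hqd
          · exact h
        have hμ1 : 1 ≤ padicValInt q (d ^ 2 - 1) := (vdvd hD 1).1 (by simpa using hqD)
        simp only [descentSetCubes]
        rw [if_neg (not_not_intro hnd), if_neg hq2, if_neg hqd]
        by_cases hμ2 : 2 ≤ padicValInt q (d ^ 2 - 1)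
        · rw [if_pos hμ2]
          simp only [Set.mem_insert_iff, Set.mem_singleton_iff, Prod.mk.injEq]
          omega
        · rw [if_neg hμ2]
          simp only [Set.mem_insert_iff, Set.mem_singleton_iff, Prod.mk.injEq]
          omega
  · have hqd : ¬ (q:ℤ) ∣ d := fun h => hnd (h.mul_right _)
    have hqD : ¬ (q:ℤ) ∣ (d ^ 2 - 1) := fun h => hnd (h.mul_left _)
    have hq2 : q ≠ 2 := by rintro rfl; exact hnd (by exact_mod_cast h2divall)
    have hv2 : padicValInt q (2:ℤ) = 0 := by rw [v2val, if_neg hq2]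
    have hν : padicValInt q d = 0 := padicValInt.eq_zero_of_not_dvd hqd
    have hμ0 : padicValInt q (d ^ 2 - 1) = 0 := padicValInt.eq_zero_of_not_dvd hqD
    simp only [descentSetCubes]
    rw [if_pos hnd]
    simp only [Set.mem_singleton_iff, Prod.mk.injEq]
    omega

private lemma cube_decomp_nat (n : ℕ) (hn : n ≠ 0) :
    ∃ α m : ℕ, α ≠ 0 ∧ m ≠ 0 ∧ n = α * m ^ 3 ∧
      ∀ q : ℕ, q.Prime → α.factorization q = n.factorization q % 3 := by
  refine ⟨∏ p ∈ n.primeFactors, p ^ (n.factorization p % 3),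
          ∏ p ∈ n.primeFactors, p ^ (n.factorization p / 3), ?_, ?_, ?_, ?_⟩
  · exact (Finset.prod_pos fun p hp =>
      pow_pos (Nat.pos_of_mem_primeFactors hp) _).ne'
  · exact (Finset.prod_pos fun p hp =>
      pow_pos (Nat.pos_of_mem_primeFactors hp) _).ne'
  · conv_lhs => rw [← Nat.factorization_prod_pow_eq_self hn]
    rw [Finsupp.prod, Nat.support_factorization,
      ← Finset.prod_pow, ← Finset.prod_mul_distrib]
    refine Finset.prod_congr rfl fun p _ => ?_
    rw [← pow_mul, ← pow_add]
    congr 1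
    omega
  · intro qq hqq
    rw [Nat.factorization_prod (fun p hp => pow_ne_zero _ (Nat.pos_of_mem_primeFactors hp).ne')]
    rw [Finset.sum_apply']
    have h1 : ∀ p ∈ n.primeFactors, (p ^ (n.factorization p % 3)).factorization qq
        = if p = qq then n.factorization p % 3 else 0 := by
      intro p hp
      rw [(Nat.prime_of_mem_primeFactors hp).factorization_pow]
      simp [Finsupp.single_apply]
    rw [Finset.sum_congr rfl h1, Finset.sum_ite_eq' n.primeFactors qq
      (fun p => n.factorization p % 3)]
    split
    · rfl
    · have h0 : n.factorization qq = 0 := Nat.factorization_eq_zero_of_not_dvd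
        (fun hdvd => ‹¬ _› (Nat.mem_primeFactors.2 ⟨hqq, hdvd, hn⟩))
      rw [h0]
      rfl

private lemma cube_decomp (n : ℤ) (hn : 0 < n) :
    ∃ α m : ℤ, 0 < α ∧ 0 < m ∧ n = α * m ^ 3 ∧
      ∀ q : ℕ, q.Prime → padicValInt q α = padicValInt q n % 3 := by
  obtain ⟨α, m, hα, hm, heq, hval⟩ := cube_decomp_nat n.toNat (by omega)
  refine ⟨(α:ℤ), (m:ℤ), by exact_mod_cast Nat.pos_of_ne_zero hα,
    by exact_mod_cast Nat.pos_of_ne_zero hm, ?_, ?_⟩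
  · have h := congrArg (fun k : ℕ => (k:ℤ)) heq
    push_cast at h
    rw [Int.toNat_of_nonneg hn.le] at h
    exact h
  · intro q hq
    haveI : Fact q.Prime := ⟨hq⟩
    have h1 : padicValInt q (α:ℤ) = α.factorization q := by
      rw [padicValInt, Int.natAbs_natCast, Nat.factorization_def α hq]
    have h2 : padicValInt q n = n.toNat.factorization q := by
      rw [padicValInt, Nat.factorization_def _ hq]
      congr 1
      omega
    rw [h1, h2, hval q hq]

/-- Descent for exponent `3`: if `d ≥ 3` and the integers `x`, `y` satisfy
`d(2x+d+1)(x² + (d+1)x + d(d+1)/2) = 2y³`, then there are positive integers `α`, `β` with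
`(ord_q(α), ord_q(β)) ∈ T_q` for every prime `q`, and integers `y₁`, `y₂`, such that
`2x+d+1 = α y₁³` and `x² + (d+1)x + d(d+1)/2 = β y₂³`. -/
theorem descent_ell_eq_three (d : ℤ) (hd : 3 ≤ d) (x y : ℤ)
    (h : d * (2 * x + d + 1) * (x ^ 2 + (d + 1) * x + d * (d + 1) / 2) = 2 * y ^ 3) :
    ∃ α β : ℤ, 0 < α ∧ 0 < β ∧
      (∀ q : ℕ, q.Prime → (padicValInt q α, padicValInt q β) ∈ descentSetCubes d q) ∧
      ∃ y₁ y₂ : ℤ,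
        2 * x + d + 1 = α * y₁ ^ 3 ∧
        x ^ 2 + (d + 1) * x + d * (d + 1) / 2 = β * y₂ ^ 3 := by
  have hc : d * (d + 1) / 2 * 2 = d * (d + 1) :=
    Int.ediv_mul_cancel (Int.even_mul_succ_self d).two_dvd
  have h4 : 4 * (x ^ 2 + (d + 1) * x + d * (d + 1) / 2)
      = (2 * x + d + 1) ^ 2 + (d ^ 2 - 1) := by linear_combination 2 * hc
  have hB : 0 < x ^ 2 + (d + 1) * x + d * (d + 1) / 2 := by
    nlinarith [sq_nonneg (2 * x + d + 1)]
  obtain ⟨β, m₂, hβ0, hm₂, hBeq, hβval⟩ := cube_decomp _ hB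
  by_cases hA : (2 * x + d + 1) = 0
  · have hdpos : (0:ℤ) < d := by omega
    obtain ⟨α, m₁, hα0, hm₁, hNeq, hαval⟩ := cube_decomp
      (2 * (d * (x ^ 2 + (d + 1) * x + d * (d + 1) / 2)) ^ 2)
      (mul_pos two_pos (pow_pos (mul_pos hdpos hB) 2))
    refine ⟨α, β, hα0, hβ0, ?_, 0, m₂, by rw [hA]; ring, hBeq⟩
    intro qq hqq
    rw [hαval qq hqq, hβval qq hqq]
    have h40 := h4
    rw [hA] at h40
    norm_num at h40
    exact core0 d hd _ hB h40 qq hqq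
  · obtain ⟨α, m₁, hα0, hm₁, hNeq, hαval⟩ := cube_decomp |2 * x + d + 1| (abs_pos.2 hA)
    refine ⟨α, β, hα0, hβ0, ?_, ?_⟩
    · intro qq hqq
      rw [hαval qq hqq, hβval qq hqq]
      have habs : padicValInt qq |2 * x + d + 1| = padicValInt qq (2 * x + d + 1) := by
        simp only [padicValInt, Int.natAbs_abs]
      rw [habs]
      exact core d hd _ _ y hA hB h4 h qq hqq
    · refine ⟨if 0 ≤ 2 * x + d + 1 then m₁ else -m₁, m₂, ?_, hBeq⟩
      split
      · rw [← abs_of_nonneg ‹(0:ℤ) ≤ 2 * x + d + 1›]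
        exact hNeq
      · have hneg : 2 * x + d + 1 < 0 := by omega
        have h5 : -(2 * x + d + 1) = α * m₁ ^ 3 := by rw [← abs_of_neg hneg]; exact hNeq
        have hg : α * (-m₁) ^ 3 = -(α * m₁ ^ 3) := by ring
        rw [hg, ← h5]; ring
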